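/- Let Ω ⊆ ℝ^N be a nonempty open set and regard L²(Ω;ℂ) as a real Hilbert space with inner product (u,v) = Re ∫_Ω u·conj(v) dx. Let X be a real Banach space, j : X → L²(Ω;ℂ) an injective continuous real-linear map with dense range, X⋆ the continuous real dual of X, and e : L²(Ω;ℂ) → X⋆ the continuous linear map e(w)(φ) = Re ∫_Ω w · conj(j(φ)) dx. Let I ⊆ ℝ be an interval, let u : I → X be strongly measurable with ess sup_{t∈I} ‖u(t)‖_X < ∞, and let v : I → X⋆ be Bochner integrable on I, such that e(j(u(t))) − e(j(u(s))) = ∫_s^t v(σ) dσ in X⋆ for all s, t ∈ I. Then t ↦ j(u(t)) agrees almost everywhere on I with a bounded continuous function w : I → L²(Ω;ℂ), and for all t ∈ I, ‖w(t)‖²_{L²(Ω)} ≤ ess sup_{s∈I} ‖u(s)‖_X · ( ess sup_{s∈I} ‖e(j(u(s)))‖_{X⋆} + ∫_I ‖v(σ)‖_{X⋆} dσ ). -/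

import Mathlib

open MeasureTheory Filter intervalIntegral
open scoped ENNReal Topology Interval

private lemma aux_norm_sq {E : Type*} [NormedAddCommGroup E] [InnerProductSpace ℂ E]
    (a : E) : ‖a‖ ^ 2 = (@inner ℂ _ _ a a).re := by
  have h := inner_self_eq_norm_sq (𝕜 := ℂ) a
  simpa using h.symm

private lemma aux_expand {E : Type*} [NormedAddCommGroup E] [InnerProductSpace ℂ E]
    (a b : E) : ‖a - b‖ ^ 2 =
      (@inner ℂ _ _ a a).re - (@inner ℂ _ _ a b).re
        - (@inner ℂ _ _ b a).re + (@inner ℂ _ _ b b).re := by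
  rw [aux_norm_sq]
  simp only [inner_sub_left, inner_sub_right, Complex.sub_re, Complex.add_re]
  ring

private lemma aux_sq_lt {x r c ε M : ℝ} (hx : 0 ≤ x) (hM : 0 ≤ M) (hε : 0 < ε)
    (h1 : x ^ 2 ≤ 2 * M * r) (h2 : 0 ≤ r) (h3 : r < c) (h4 : c = ε ^ 2 / (2 * M + 1)) :
    x < ε := by
  have hc : 2 * M * r < ε ^ 2 := by
    rw [h4] at h3
    have h5 : (2 * M + 1) * r < ε ^ 2 := by
      have := (lt_div_iff₀ (by linarith : (0:ℝ) < 2 * M + 1)).1 h3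
      nlinarith
    nlinarith
  nlinarith

set_option maxHeartbeats 1600000 in
/-- Continuous embedding `L^∞(I;X) ∩ W^{1,1}(I;X⋆) ↪ C_b(I;L²(Ω))`, where
`X ↪ L²(Ω;ℂ) ↪ X⋆` via a dense continuous injection `j` and the map `e`
(`e(w)(φ) = Re ∫_Ω w·conj(jφ)`): if `u` is essentially bounded in `X` and its weak
derivative `v` (through the embedding) is Bochner integrable, then `j∘u` has a
bounded continuous representative `w` in `L²(Ω;ℂ)` with
`‖w(t)‖² ≤ ess sup ‖u‖_X · (ess sup ‖e(j(u))‖_{X⋆} + ∫_I ‖v‖_{X⋆})` for all `t ∈ I`. -/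
theorem Linf_W11_embeds_in_Cb_L2
    (N : ℕ) (Ω : Set (EuclideanSpace ℝ (Fin N))) (hΩ : IsOpen Ω) (hΩne : Ω.Nonempty)
    (X : Type*) [NormedAddCommGroup X] [NormedSpace ℝ X]
    (j : X →L[ℝ] Lp ℂ 2 (volume.restrict Ω))
    (hjinj : Function.Injective j) (hjdense : DenseRange j)
    (e : Lp ℂ 2 (volume.restrict Ω) →L[ℝ] (X →L[ℝ] ℝ))
    (he : ∀ (w : Lp ℂ 2 (volume.restrict Ω)) (φ : X),
      e w φ = (∫ x, (w : EuclideanSpace ℝ (Fin N) → ℂ) x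
        * (starRingEnd ℂ) ((j φ : EuclideanSpace ℝ (Fin N) → ℂ) x) ∂(volume.restrict Ω)).re)
    (I : Set ℝ) (hI : I.OrdConnected)
    (u : ℝ → X) (hu : AEStronglyMeasurable u (volume.restrict I))
    (Mu Me : ℝ) (hMu0 : 0 ≤ Mu) (hMe0 : 0 ≤ Me)
    (hMu : ∀ᵐ t ∂(volume.restrict I), ‖u t‖ ≤ Mu)
    (hMe : ∀ᵐ t ∂(volume.restrict I), ‖e (j (u t))‖ ≤ Me)
    (v : ℝ → X →L[ℝ] ℝ) (hv : IntegrableOn v I volume)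
    (hid : ∀ s ∈ I, ∀ t ∈ I, e (j (u t)) - e (j (u s)) = ∫ σ in s..t, v σ) :
    ∃ w : ℝ → Lp ℂ 2 (volume.restrict Ω),
      ContinuousOn w I ∧
      (∀ᵐ t ∂(volume.restrict I), w t = j (u t)) ∧
      ∀ t ∈ I, ‖w t‖ ^ 2 ≤ Mu * (Me + ∫ σ in I, ‖v σ‖) := by
  classical
  have hIv_nonneg : 0 ≤ ∫ σ in I, ‖v σ‖ := integral_nonneg fun σ => norm_nonneg _
  have hRHS0 : 0 ≤ Mu * (Me + ∫ σ in I, ‖v σ‖) :=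
    mul_nonneg hMu0 (by linarith)
  -- trivial case: `I` has at most one point
  by_cases hex : ∃ a ∈ I, ∃ b ∈ I, a < b
  swap
  · push_neg at hex
    have hsub : I.Subsingleton := by
      intro x hx y hy
      exact le_antisymm (hex y hy x hx) (hex x hx y hy)
    have h0 : volume I = 0 := hsub.measure_zero volume
    have h0' : volume.restrict I = 0 := Measure.restrict_eq_zero.2 h0
    refine ⟨fun _ => 0, continuousOn_const, ?_, ?_⟩
    · rw [h0']; simp
    · intro t ht
      simpa using hRHS0
  obtain ⟨a, haI, b, hbI, hab⟩ := hex
  -- the inner-product formula for `e`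
  have hinner : ∀ (w : Lp ℂ 2 (volume.restrict Ω)) (φ : X),
      e w φ = (@inner ℂ _ _ (j φ) w).re := by
    intro w φ
    rw [he, MeasureTheory.L2.inner_def]
    congr 1
  -- the good set `S`
  set S : Set ℝ := {t | t ∈ I ∧ ‖u t‖ ≤ Mu ∧ ‖e (j (u t))‖ ≤ Me} with hSdef
  have h_null : (volume.restrict I) {t | ¬(‖u t‖ ≤ Mu ∧ ‖e (j (u t))‖ ≤ Me)} = 0 := by
    have h := hMu.and hMe
    rwa [ae_iff] at h
  -- key quantitative estimate
  have hQ : ∀ s ∈ S, ∀ s' ∈ S,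
      ‖j (u s) - j (u s')‖ ^ 2 ≤ 2 * Mu * ∫ x in Ι s s', ‖v x‖ := by
    intro s hs s' hs'
    have hD : e (j (u s)) - e (j (u s')) = ∫ σ in s'..s, v σ := hid s' hs'.1 s hs.1
    set D : X →L[ℝ] ℝ := ∫ σ in s'..s, v σ with hDdef
    have h1 := hinner (j (u s)) (u s)
    have h2 := hinner (j (u s)) (u s')
    have h3 := hinner (j (u s')) (u s)
    have h4 := hinner (j (u s')) (u s')
    have hD1 : D (u s) = e (j (u s)) (u s) - e (j (u s')) (u s) := by
      rw [← hD]; simp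
    have hD2 : D (u s') = e (j (u s)) (u s') - e (j (u s')) (u s') := by
      rw [← hD]; simp
    have hexp : ‖j (u s) - j (u s')‖ ^ 2 = D (u s) - D (u s') := by
      rw [aux_expand]
      linarith
    have hDa : D (u s) - D (u s') = D (u s - u s') := by rw [map_sub]
    have hb1 : D (u s - u s') ≤ ‖D‖ * ‖u s - u s'‖ := by
      refine (le_abs_self _).trans ?_
      rw [← Real.norm_eq_abs]
      exact D.le_opNorm _
    have hb2 : ‖D‖ ≤ ∫ x in Ι s s', ‖v x‖ := by
      rw [← Set.uIoc_comm]
      exact intervalIntegral.norm_integral_le_integral_norm_uIoc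
    have hb3 : ‖u s - u s'‖ ≤ 2 * Mu := by
      refine (norm_sub_le _ _).trans ?_
      linarith [hs.2.1, hs'.2.1]
    have hnn : 0 ≤ ∫ x in Ι s s', ‖v x‖ := integral_nonneg fun x => norm_nonneg _
    calc ‖j (u s) - j (u s')‖ ^ 2 = D (u s - u s') := by rw [hexp, hDa]
      _ ≤ ‖D‖ * ‖u s - u s'‖ := hb1
      _ ≤ (∫ x in Ι s s', ‖v x‖) * (2 * Mu) :=
        mul_le_mul hb2 hb3 (norm_nonneg _) hnn
      _ = 2 * Mu * ∫ x in Ι s s', ‖v x‖ := by ring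
  -- pointwise bound on the good set
  have hB : ∀ s ∈ S, ‖j (u s)‖ ^ 2 ≤ Mu * Me := by
    intro s hs
    have h1 := hinner (j (u s)) (u s)
    have h2 : ‖j (u s)‖ ^ 2 = e (j (u s)) (u s) := by
      rw [aux_norm_sq, h1]
    rw [h2]
    calc e (j (u s)) (u s) ≤ ‖e (j (u s)) (u s)‖ := le_abs_self _
      _ ≤ ‖e (j (u s))‖ * ‖u s‖ := (e (j (u s))).le_opNorm _
      _ ≤ Me * Mu := mul_le_mul hs.2.2 hs.2.1 (norm_nonneg _) hMe0
      _ = Mu * Me := mul_comm _ _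
  -- absolute continuity of the integral of `‖v‖`
  have hAC : ∀ ε > (0:ℝ), ∃ δ > (0:ℝ), ∀ p ∈ I, ∀ q ∈ I,
      |p - q| < δ → (∫ x in Ι p q, ‖v x‖) < ε := by
    intro ε hε
    have hfin : (∫⁻ x, ‖v x‖₊ ∂(volume.restrict I)) ≠ ∞ := hv.2.ne
    obtain ⟨δ, hδ0, hδ⟩ := exists_pos_setLIntegral_lt_of_measure_lt hfin
      (ε := ENNReal.ofReal ε) (hε := (ENNReal.ofReal_pos.2 hε).ne')
    obtain ⟨r, hr0, hrδ⟩ := ENNReal.lt_iff_exists_nnreal_btwn.1 hδ0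
    refine ⟨r, by exact_mod_cast hr0, ?_⟩
    intro p hp q hq hpq
    have hsub : Ι p q ⊆ I :=
      Set.uIoc_subset_uIcc.trans (hI.uIcc_subset hp hq)
    have hmeas : (volume.restrict I) (Ι p q) < δ := by
      refine lt_of_le_of_lt ((Measure.restrict_le_self) _) ?_
      have : volume (Ι p q) = ENNReal.ofReal (max p q - min p q) := by
        rw [Set.uIoc, Real.volume_Ioc]
      rw [this]
      refine lt_of_lt_of_le ?_ hrδ.le
      rw [show ((r:ℝ≥0∞)) = ENNReal.ofReal (r:ℝ) by simp]
      refine (ENNReal.ofReal_lt_ofReal_iff (by exact_mod_cast hr0)).2 ?_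
      rw [max_sub_min_eq_abs]
      first
      | exact hpq
      | (rw [abs_sub_comm]; exact hpq)
    have h2 := hδ (Ι p q) hmeas
    rw [Measure.restrict_restrict_of_subset hsub] at h2
    have h3 : ENNReal.ofReal (∫ x in Ι p q, ‖v x‖) =
        ∫⁻ x in Ι p q, ‖v x‖₊ ∂volume :=
      ofReal_integral_norm_eq_lintegral_enorm (hv.mono_set hsub)
    have h4 : ENNReal.ofReal (∫ x in Ι p q, ‖v x‖) < ENNReal.ofReal ε := by
      rw [h3]; exact h2
    exact (ENNReal.ofReal_lt_ofReal_iff hε).1 h4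
  -- density of `S` in `I`
  have hKS : ∀ K : Set ℝ, MeasurableSet K → K ⊆ I → volume K ≠ 0 → (K ∩ S).Nonempty := by
    intro K hKm hKI hK0
    by_contra h
    rw [Set.not_nonempty_iff_eq_empty] at h
    have hKT : K ⊆ {t | ¬(‖u t‖ ≤ Mu ∧ ‖e (j (u t))‖ ≤ Me)} := by
      intro x hx hPx
      have : x ∈ K ∩ S := ⟨hx, hKI hx, hPx.1, hPx.2⟩
      rw [h] at this
      exact this
    have h0 : (volume.restrict I) K = 0 := measure_mono_null hKT h_null
    rw [Measure.restrict_apply hKm, Set.inter_eq_self_of_subset_left hKI] at h0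
    exact hK0 h0
  have hdense : ∀ t ∈ I, ∀ ε > (0:ℝ), ∃ y ∈ S, |t - y| < ε := by
    intro t ht ε hε
    rcases lt_or_ge t b with h | h
    · have hc : t < min b (t + ε / 2) := lt_min h (by linarith)
      have hKI : Set.Ioc t (min b (t + ε / 2)) ⊆ I := fun x hx =>
        hI.out ht hbI ⟨hx.1.le, hx.2.trans (min_le_left _ _)⟩
      have hvol : volume (Set.Ioc t (min b (t + ε / 2))) ≠ 0 := by
        rw [Real.volume_Ioc]
        simp only [ne_eq, ENNReal.ofReal_eq_zero, not_le]
        linarith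
      obtain ⟨y, hyK, hyS⟩ := hKS _ measurableSet_Ioc hKI hvol
      refine ⟨y, hyS, ?_⟩
      have h1 : t < y := hyK.1
      have h2 : y ≤ min b (t + ε / 2) := hyK.2
      have h3 : y ≤ t + ε / 2 := h2.trans (min_le_right _ _)
      rw [abs_sub_comm, abs_of_pos (by linarith)]
      linarith
    · have hat : a < t := lt_of_lt_of_le hab h
      have hc : max a (t - ε / 2) < t := max_lt hat (by linarith)
      have hKI : Set.Ico (max a (t - ε / 2)) t ⊆ I := fun x hx =>
        hI.out haI ht ⟨le_trans (le_max_left _ _) hx.1, hx.2.le⟩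
      have hvol : volume (Set.Ico (max a (t - ε / 2)) t) ≠ 0 := by
        rw [Real.volume_Ico]
        simp only [ne_eq, ENNReal.ofReal_eq_zero, not_le]
        linarith
      obtain ⟨y, hyK, hyS⟩ := hKS _ measurableSet_Ico hKI hvol
      refine ⟨y, hyS, ?_⟩
      have h1 : max a (t - ε / 2) ≤ y := hyK.1
      have h2 : y < t := hyK.2
      have h3 : t - ε / 2 ≤ y := le_trans (le_max_right _ _) h1
      rw [abs_of_pos (by linarith)]
      linarith
  have hne : ∀ t ∈ I, (𝓝[S] t).NeBot := by
    intro t ht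
    rw [← mem_closure_iff_nhdsWithin_neBot, Metric.mem_closure_iff]
    intro ε hε
    obtain ⟨y, hy, hlt⟩ := hdense t ht ε hε
    exact ⟨y, hy, by rwa [Real.dist_eq]⟩
  -- convergence of `j ∘ u` along `S` at every point of `I`
  have hconv : ∀ t ∈ I, ∃ L, Tendsto (fun s => j (u s)) (𝓝[S] t) (𝓝 L) := by
    intro t ht
    haveI := hne t ht
    have hcauchy : Cauchy (map (fun s => j (u s)) (𝓝[S] t)) := by
      rw [Metric.cauchy_iff]
      refine ⟨this.map _, fun ε hε => ?_⟩
      obtain ⟨δ, hδ0, hδ⟩ := hAC (ε ^ 2 / (2 * Mu + 1)) (by positivity)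
      refine ⟨(fun s => j (u s)) '' (S ∩ Metric.ball t (δ / 2)), ?_, ?_⟩
      · exact image_mem_map (Filter.inter_mem self_mem_nhdsWithin
          (mem_nhdsWithin_of_mem_nhds (Metric.ball_mem_nhds t (by positivity))))
      · rintro x ⟨p, ⟨hpS, hpb⟩, rfl⟩ y ⟨q, ⟨hqS, hqb⟩, rfl⟩
        rw [Metric.mem_ball, Real.dist_eq] at hpb hqb
        have hpq : |p - q| < δ := by
          calc |p - q| ≤ |p - t| + |t - q| := abs_sub_le _ _ _
            _ < δ := by rw [abs_sub_comm t q]; linarith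
        have hint := hδ p hpS.1 q hqS.1 hpq
        have hq2 := hQ p hpS q hqS
        have hnn : 0 ≤ ∫ x in Ι p q, ‖v x‖ := integral_nonneg fun x => norm_nonneg _
        rw [dist_eq_norm]
        exact aux_sq_lt (norm_nonneg _) hMu0 hε hq2 hnn hint rfl
    obtain ⟨L, hL⟩ := CompleteSpace.complete hcauchy
    exact ⟨L, hL⟩
  choose L hL using hconv
  set w : ℝ → Lp ℂ 2 (volume.restrict Ω) :=
    fun t => if h : t ∈ I then L t h else 0 with hwdef
  have hw : ∀ t (ht : t ∈ I), Tendsto (fun s => j (u s)) (𝓝[S] t) (𝓝 (w t)) := by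
    intro t ht
    have : w t = L t ht := dif_pos ht
    rw [this]
    exact hL t ht
  -- `w = j ∘ u` on `S`
  have hwS : ∀ s ∈ S, w s = j (u s) := by
    intro s hs
    haveI := hne s hs.1
    have h1 := hw s hs.1
    have h2 : Tendsto (fun x => j (u x)) (𝓝[S] s) (𝓝 (j (u s))) := by
      rw [Metric.tendsto_nhds]
      intro ε hε
      obtain ⟨δ, hδ0, hδ⟩ := hAC (ε ^ 2 / (2 * Mu + 1)) (by positivity)
      filter_upwards [Filter.inter_mem self_mem_nhdsWithin
        (mem_nhdsWithin_of_mem_nhds (Metric.ball_mem_nhds s hδ0))] with x hx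
      obtain ⟨hxS, hxb⟩ := hx
      rw [Metric.mem_ball, Real.dist_eq] at hxb
      have hint := hδ x hxS.1 s hs.1 hxb
      have hq2 := hQ x hxS s hs
      have hnn : 0 ≤ ∫ y in Ι x s, ‖v y‖ := integral_nonneg fun y => norm_nonneg _
      rw [dist_eq_norm]
      exact aux_sq_lt (norm_nonneg _) hMu0 hε hq2 hnn hint rfl
    exact tendsto_nhds_unique h1 h2
  refine ⟨w, ?_, ?_, ?_⟩
  · -- continuity
    intro t ht
    rw [Metric.continuousWithinAt_iff]
    intro ε hε
    obtain ⟨δ, hδ0, hδ⟩ := hAC ((ε / 2) ^ 2 / (2 * Mu + 1)) (by positivity)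
    refine ⟨δ / 2, by positivity, ?_⟩
    intro t' ht' hdist
    rw [Real.dist_eq] at hdist
    have hle : dist (w t') (w t) ≤ ε / 2 := by
      haveI h1 := hne t' ht'
      haveI h2 := hne t ht
      haveI : ((𝓝[S] t') ×ˢ (𝓝[S] t)).NeBot := Filter.prod_neBot.2 ⟨h1, h2⟩
      have htd : Tendsto (fun p : ℝ × ℝ => dist (j (u p.1)) (j (u p.2)))
          ((𝓝[S] t') ×ˢ (𝓝[S] t)) (𝓝 (dist (w t') (w t))) :=
        ((hw t' ht').comp tendsto_fst).dist ((hw t ht).comp tendsto_snd)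
      refine le_of_tendsto htd ?_
      have hm1 : S ∩ Metric.ball t' (δ / 4) ∈ 𝓝[S] t' :=
        Filter.inter_mem self_mem_nhdsWithin
          (mem_nhdsWithin_of_mem_nhds (Metric.ball_mem_nhds t' (by positivity)))
      have hm2 : S ∩ Metric.ball t (δ / 4) ∈ 𝓝[S] t :=
        Filter.inter_mem self_mem_nhdsWithin
          (mem_nhdsWithin_of_mem_nhds (Metric.ball_mem_nhds t (by positivity)))
      filter_upwards [Filter.prod_mem_prod hm1 hm2] with p hp
      obtain ⟨⟨hp1S, hp1b⟩, hp2S, hp2b⟩ := hp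
      rw [Metric.mem_ball, Real.dist_eq] at hp1b hp2b
      have hpq : |p.1 - p.2| < δ := by
        calc |p.1 - p.2| ≤ |p.1 - t'| + |t' - p.2| := abs_sub_le _ _ _
          _ ≤ |p.1 - t'| + (|t' - t| + |t - p.2|) := by
              linarith [abs_sub_le t' t p.2]
          _ < δ := by rw [abs_sub_comm t p.2]; linarith
      have hint := hδ p.1 hp1S.1 p.2 hp2S.1 hpq
      have hq2 := hQ p.1 hp1S p.2 hp2S
      have hnn : 0 ≤ ∫ x in Ι p.1 p.2, ‖v x‖ := integral_nonneg fun x => norm_nonneg _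
      rw [dist_eq_norm]
      exact (aux_sq_lt (norm_nonneg _) hMu0 (by positivity) hq2 hnn hint rfl).le
    linarith
  · -- a.e. equality
    filter_upwards [hMu, hMe, ae_restrict_mem hI.measurableSet] with t h1 h2 h3
    exact hwS t ⟨h3, h1, h2⟩
  · -- the bound
    intro t ht
    haveI := hne t ht
    have htd : Tendsto (fun s => ‖j (u s)‖ ^ 2) (𝓝[S] t) (𝓝 (‖w t‖ ^ 2)) :=
      ((hw t ht).norm).pow 2
    have hle : ‖w t‖ ^ 2 ≤ Mu * Me := by
      refine le_of_tendsto htd ?_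
      filter_upwards [self_mem_nhdsWithin] with s hs
      exact hB s hs
    refine hle.trans ?_
    have : Me ≤ Me + ∫ σ in I, ‖v σ‖ := by linarith
    exact mul_le_mul_of_nonneg_left this hMu0
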